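/- For all integers n ≥ 2 and k ≥ 1, q_{Gr_ℝ(k,•)}(n) = 1 + max(k, q(n)). -/

import Mathlib

open MvPolynomial Matrix

noncomputable section

/-- The unit sphere `S^n ⊂ ℝ^{n+1}`, as the set of points with sum of squared coordinates 1. -/
def sphereSet (n : ℕ) : Set (Fin (n + 1) → ℝ) := {x | ∑ i, x i ^ 2 = 1}

/-- Each component of `F` is (the evaluation of) a real polynomial. -/
def IsPolyFun {n m : ℕ} (F : (Fin n → ℝ) → (Fin m → ℝ)) : Prop :=
  ∀ j, ∃ p : MvPolynomial (Fin n) ℝ, ∀ x, F x j = eval x p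

/-- A polynomial map `S^n → S^r`: a polynomial map `ℝ^{n+1} → ℝ^{r+1}` sending the sphere to
the sphere. -/
def IsSpherePolyMap (n r : ℕ) (F : (Fin (n + 1) → ℝ) → (Fin (r + 1) → ℝ)) : Prop :=
  IsPolyFun F ∧ ∀ x ∈ sphereSet n, F x ∈ sphereSet r

/-- `F` is non-constant on the set `s`. -/
def NonconstOn {α β : Type*} (s : Set α) (F : α → β) : Prop :=
  ∃ x ∈ s, ∃ y ∈ s, F x ≠ F y

/-- There exists a polynomial map `S^n → S^r` which is non-constant on `S^n`. -/
def ExistsNonconstPolyMap (n r : ℕ) : Prop :=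
  ∃ F : (Fin (n + 1) → ℝ) → (Fin (r + 1) → ℝ),
    IsSpherePolyMap n r F ∧ NonconstOn (sphereSet n) F

/-- `q n` is the least `r ≥ 1` for which there exists a non-constant polynomial map
`S^n → S^r`. -/
def q (n : ℕ) : ℕ := sInf {r | 1 ≤ r ∧ ExistsNonconstPolyMap n r}
/-- There exists a non-constant polynomial map `S^n → Gr_ℝ(k,r)`, the Grassmannian of
`k`-planes in `ℝ^r` being identified with the set of symmetric rank-`k` orthogonal
projection matrices. -/
def ExistsNonconstPolyMapGrR (n k r : ℕ) : Prop :=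
  ∃ P : (Fin (n + 1) → ℝ) → Matrix (Fin r) (Fin r) ℝ,
    (∀ i j : Fin r, ∃ p : MvPolynomial (Fin (n + 1)) ℝ, ∀ v, P v i j = eval v p) ∧
    (∀ v ∈ sphereSet n, (P v)ᵀ = P v ∧ P v * P v = P v ∧ (P v).rank = k) ∧
    NonconstOn (sphereSet n) P

/-- `q_{Gr_ℝ(k,•)}(n)`: the least `r ≥ k` admitting a non-constant polynomial map
`S^n → Gr_ℝ(k,r)`. -/
def qGrR (k n : ℕ) : ℕ := sInf {r | k ≤ r ∧ ExistsNonconstPolyMapGrR n k r}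

-- ===== auxiliary =====

section Aux

/-- A real-valued function on `ℝ^N` given by a polynomial. -/
def PF {N : ℕ} (h : (Fin N → ℝ) → ℝ) : Prop :=
  ∃ p : MvPolynomial (Fin N) ℝ, ∀ x, h x = eval x p

variable {N : ℕ}

lemma PF_const (c : ℝ) : PF (fun _ : Fin N → ℝ => c) := ⟨C c, fun x => by simp⟩

lemma PF.add {f g : (Fin N → ℝ) → ℝ} (hf : PF f) (hg : PF g) : PF (fun x => f x + g x) := by
  obtain ⟨p, hp⟩ := hf; obtain ⟨p', hp'⟩ := hg
  exact ⟨p + p', fun x => by simp [hp, hp']⟩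

lemma PF.mul {f g : (Fin N → ℝ) → ℝ} (hf : PF f) (hg : PF g) : PF (fun x => f x * g x) := by
  obtain ⟨p, hp⟩ := hf; obtain ⟨p', hp'⟩ := hg
  exact ⟨p * p', fun x => by simp [hp, hp']⟩

lemma PF.sub {f g : (Fin N → ℝ) → ℝ} (hf : PF f) (hg : PF g) : PF (fun x => f x - g x) := by
  obtain ⟨p, hp⟩ := hf; obtain ⟨p', hp'⟩ := hg
  exact ⟨p - p', fun x => by simp [hp, hp']⟩

lemma PF_sum {ι : Type*} (s : Finset ι) (f : ι → (Fin N → ℝ) → ℝ)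
    (hf : ∀ i ∈ s, PF (f i)) : PF (fun x => ∑ i ∈ s, f i x) := by
  classical
  induction s using Finset.induction_on with
  | empty => simpa using PF_const (N := N) 0
  | @insert a s ha ih =>
      have hrw : (fun x => ∑ i ∈ insert a s, f i x) = fun x => f a x + ∑ i ∈ s, f i x := by
        funext x; rw [Finset.sum_insert ha]
      rw [hrw]
      exact (hf a (Finset.mem_insert_self a s)).add
        (ih fun i hi => hf i (Finset.mem_insert_of_mem hi))

lemma PF.continuous {f : (Fin N → ℝ) → ℝ} (hf : PF f) : Continuous f := by
  obtain ⟨p, hp⟩ := hf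
  have : f = fun x => eval x p := funext hp
  rw [this]; exact MvPolynomial.continuous_eval p

end Aux

-- sphere is preconnected
lemma sphereSet_eq_image (n : ℕ) :
    sphereSet n = (⇑(WithLp.equiv 2 (Fin (n+1) → ℝ))) ''
      (Metric.sphere (0 : EuclideanSpace ℝ (Fin (n+1))) 1) := by
  ext x
  have key : ∀ y : EuclideanSpace ℝ (Fin (n+1)),
      (‖y‖ = 1 ↔ ∑ i, ((WithLp.equiv 2 (Fin (n+1) → ℝ)) y i) ^ 2 = 1) := by
    intro y
    rw [EuclideanSpace.norm_eq]
    have : ∀ i, ‖y i‖ ^ 2 = ((WithLp.equiv 2 (Fin (n+1) → ℝ)) y i) ^ 2 := by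
      intro i; rw [Real.norm_eq_abs, sq_abs]; rfl
    rw [Finset.sum_congr rfl fun i _ => this i]
    constructor
    · intro h
      have h0 : (0:ℝ) ≤ ∑ i, ((WithLp.equiv 2 (Fin (n+1) → ℝ)) y i) ^ 2 :=
        Finset.sum_nonneg fun i _ => sq_nonneg _
      nlinarith [Real.sq_sqrt h0, Real.sqrt_nonneg (∑ i, ((WithLp.equiv 2 (Fin (n+1) → ℝ)) y i) ^ 2)]
    · intro h; rw [h]; exact Real.sqrt_one
  constructor
  · intro hx
    refine ⟨(WithLp.equiv 2 (Fin (n+1) → ℝ)).symm x, ?_, by simp⟩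
    rw [mem_sphere_zero_iff_norm, key]
    simpa [sphereSet] using hx
  · rintro ⟨y, hy, rfl⟩
    rw [mem_sphere_zero_iff_norm, key] at hy
    exact hy

lemma sphere_isPreconnected (n : ℕ) (hn : 1 ≤ n) : IsPreconnected (sphereSet n) := by
  have hrank : (1 : Cardinal) < Module.rank ℝ (EuclideanSpace ℝ (Fin (n+1))) := by
    rw [← Module.finrank_eq_rank, finrank_euclideanSpace_fin]
    exact_mod_cast (by omega : 1 < n + 1)
  have hconn := isConnected_sphere hrank (0 : EuclideanSpace ℝ (Fin (n+1))) zero_le_one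
  rw [sphereSet_eq_image]
  have hcont : Continuous (⇑(WithLp.equiv 2 (Fin (n+1) → ℝ))) :=
    (PiLp.continuousLinearEquiv 2 ℝ (fun _ : Fin (n+1) => ℝ)).continuous
  exact (hconn.image _ hcont.continuousOn).isPreconnected
lemma exists_proj_ne {n s : ℕ} (hn : 1 ≤ n) {g : (Fin (n+1) → ℝ) → (Fin s → ℝ)}
    (hpoly : ∀ j, PF (fun x => g x j))
    (hunit : ∀ x ∈ sphereSet n, ∑ j, g x j ^ 2 = 1)
    (hnc : NonconstOn (sphereSet n) g) :
    ∃ a ∈ sphereSet n, ∃ b ∈ sphereSet n,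
      vecMulVec (g a) (g a) ≠ vecMulVec (g b) (g b) := by
  obtain ⟨a, ha, b, hb, hab⟩ := hnc
  by_contra hcon
  push_neg at hcon
  have hvv : ∀ x ∈ sphereSet n, ∀ i j, g x i * g x j = g a i * g a j := by
    intro x hx i j
    have h := hcon x hx a ha
    have h2 := congrFun (congrFun h i) j
    simpa [vecMulVec_apply] using h2
  set ε : (Fin (n+1) → ℝ) → ℝ := fun x => ∑ j, g a j * g x j with hε
  have hkey : ∀ x ∈ sphereSet n, ∀ i, g x i = g a i * ε x := by
    intro x hx i
    calc g x i = g x i * ∑ j, g x j ^ 2 := by rw [hunit x hx, mul_one]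
    _ = ∑ j, (g x i * g x j) * g x j := by
        rw [Finset.mul_sum]; exact Finset.sum_congr rfl fun j _ => by ring
    _ = ∑ j, (g a i * g a j) * g x j := Finset.sum_congr rfl fun j _ => by rw [hvv x hx i j]
    _ = g a i * ε x := by
        rw [hε, Finset.mul_sum]; exact Finset.sum_congr rfl fun j _ => by ring
  have hsq : ∀ x ∈ sphereSet n, ε x ^ 2 = 1 := by
    intro x hx
    have h1 : (1:ℝ) = ∑ i, (g a i * ε x) ^ 2 := by
      rw [← hunit x hx]; exact Finset.sum_congr rfl fun i _ => by rw [hkey x hx i]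
    have h2 : ∑ i, (g a i * ε x) ^ 2 = ε x ^ 2 * ∑ i, g a i ^ 2 := by
      rw [Finset.mul_sum]; exact Finset.sum_congr rfl fun i _ => by ring
    rw [h2, hunit a ha, mul_one] at h1
    exact h1.symm
  have hεa : ε a = 1 := by
    show ∑ j, g a j * g a j = 1
    have h1 : ∀ j, g a j * g a j = g a j ^ 2 := fun j => (sq (g a j)).symm
    rw [Finset.sum_congr rfl fun j _ => h1 j]
    exact hunit a ha
  have hεb : ε b = -1 := by
    have h0 : (ε b - 1) * (ε b + 1) = 0 := by have := hsq b hb; nlinarith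
    rcases mul_eq_zero.mp h0 with h | h
    · exfalso
      apply hab
      funext i
      rw [hkey b hb i, show ε b = 1 by linarith, mul_one]
    · linarith
  have hcont : ContinuousOn ε (sphereSet n) := by
    apply Continuous.continuousOn
    apply continuous_finset_sum
    intro j _
    exact continuous_const.mul (hpoly j).continuous
  have hicc := (sphere_isPreconnected n hn).intermediate_value hb ha hcont
  have h0 : (0:ℝ) ∈ Set.Icc (ε b) (ε a) := by
    rw [hεa, hεb]; constructor <;> norm_num
  obtain ⟨x0, hx0, hεx0⟩ := hicc h0
  have := hsq x0 hx0
  rw [hεx0] at this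
  norm_num at this
-- identity gives a nonconstant polynomial self-map of the sphere
lemma exists_nonconst_id (n : ℕ) : ExistsNonconstPolyMap n n := by
  have hs : ∀ c : ℝ, c ^ 2 = 1 → (Pi.single (0 : Fin (n+1)) c) ∈ sphereSet n := by
    intro c hc
    show ∑ i, (Pi.single (0 : Fin (n+1)) c : Fin (n+1) → ℝ) i ^ 2 = (1:ℝ)
    simp [Pi.single_apply, hc]
  refine ⟨id, ⟨fun j => ⟨X j, fun x => by simp⟩, fun x hx => hx⟩,
    Pi.single 0 1, hs 1 (by norm_num), Pi.single 0 (-1), hs (-1) (by norm_num), fun h => ?_⟩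
  have h2 := congrFun h 0
  simp at h2
  norm_num at h2

-- padding a sphere map into a bigger sphere
lemma pad_map {n Q m : ℕ} (hqm : Q ≤ m) (h : ExistsNonconstPolyMap n Q) :
    ExistsNonconstPolyMap n m := by
  classical
  obtain ⟨f, ⟨hfp, hfs⟩, a, ha, b, hb, hab⟩ := h
  have hQm : Q + 1 ≤ m + 1 := by omega
  set g : (Fin (n+1) → ℝ) → (Fin (m+1) → ℝ) :=
    fun x j => if h : (j : ℕ) < Q + 1 then f x ⟨j, h⟩ else 0 with hgdef
  have hgapp : ∀ x j, g x j = if h : (j : ℕ) < Q + 1 then f x ⟨j, h⟩ else 0 := fun x j => rfl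
  refine ⟨g, ⟨?_, ?_⟩, a, ha, b, hb, ?_⟩
  · intro j
    by_cases hj : (j : ℕ) < Q + 1
    · obtain ⟨p, hp⟩ := hfp ⟨j, hj⟩
      exact ⟨p, fun x => by rw [hgapp, dif_pos hj]; exact hp x⟩
    · exact ⟨0, fun x => by rw [hgapp, dif_neg hj]; simp⟩
  · intro x hx
    have hfx : ∑ i, f x i ^ 2 = 1 := hfs x hx
    show ∑ j : Fin (m+1), g x j ^ 2 = 1
    have hzero : ∀ j ∈ (Finset.univ : Finset (Fin (m+1))),
        j ∉ Finset.univ.map (Fin.castLEEmb hQm) → g x j ^ 2 = 0 := by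
      intro j _ hj
      have hnot : ¬ ((j:ℕ) < Q + 1) := by
        intro hlt
        exact hj (Finset.mem_map.mpr ⟨⟨j, hlt⟩, Finset.mem_univ _, by
          simp [Fin.castLEEmb, Fin.castLE]⟩)
      rw [hgapp, dif_neg hnot]
      norm_num
    rw [← Finset.sum_subset (Finset.subset_univ _) hzero, Finset.sum_map]
    have heq : ∀ i : Fin (Q+1), g x (Fin.castLEEmb hQm i) ^ 2 = f x i ^ 2 := by
      intro i
      rw [hgapp, dif_pos (by simpa [Fin.castLEEmb, Fin.castLE] using i.isLt)]
      congr 2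
    rw [Finset.sum_congr rfl fun i _ => heq i]
    exact hfx
  · intro hEq
    apply hab
    funext i
    have h3 := congrFun hEq (Fin.castLE hQm i)
    have hlt : ((Fin.castLE hQm i : Fin (m+1)) : ℕ) < Q + 1 := by
      simpa [Fin.castLE] using i.isLt
    rw [hgapp, hgapp, dif_pos hlt, dif_pos hlt] at h3
    simpa using h3
-- ===== matrix helpers =====

/-- Reflection `1 - 2 g gᵀ`. -/
def reflM {r : ℕ} (g : Fin r → ℝ) : Matrix (Fin r) (Fin r) ℝ :=
  1 - (2:ℝ) • vecMulVec g g

lemma vv_mul_vv {r : ℕ} {g : Fin r → ℝ} (hg : ∑ i, g i ^ 2 = 1) :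
    vecMulVec g g * vecMulVec g g = vecMulVec g g := by
  ext i j
  simp only [Matrix.mul_apply, vecMulVec_apply]
  have h : ∀ l, g i * g l * (g l * g j) = (g i * g j) * g l ^ 2 := fun l => by ring
  rw [Finset.sum_congr rfl fun l _ => h l, ← Finset.mul_sum, hg, mul_one]

lemma vv_transpose {r : ℕ} (g : Fin r → ℝ) : (vecMulVec g g)ᵀ = vecMulVec g g := by
  ext i j; simp [vecMulVec_apply, mul_comm]

lemma reflT {r : ℕ} (g : Fin r → ℝ) : (reflM g)ᵀ = reflM g := by
  unfold reflM
  rw [transpose_sub, transpose_one, transpose_smul, vv_transpose]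

lemma refl_mul_self {r : ℕ} {g : Fin r → ℝ} (hg : ∑ i, g i ^ 2 = 1) :
    reflM g * reflM g = 1 := by
  unfold reflM
  set G := vecMulVec g g with hG
  set A := (2:ℝ) • G with hA
  have h4 : A * A = (4:ℝ) • G := by
    rw [hA, smul_mul_assoc, Matrix.mul_smul, vv_mul_vv hg, smul_smul]
    norm_num
    exact hG.symm
  calc (1 - A) * (1 - A) = 1 - A - (A - A * A) := by
        rw [sub_mul, one_mul, mul_sub, mul_one]
  _ = 1 - A - (A - (4:ℝ) • G) := by rw [h4]
  _ = 1 := by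
      have h5 : A - (4:ℝ) • G = -A := by
        rw [hA, ← neg_smul, ← sub_smul]
        norm_num
      rw [h5]
      abel

lemma trace_refl {r : ℕ} {g : Fin r → ℝ} (hg : ∑ i, g i ^ 2 = 1) :
    (reflM g).trace = (r:ℝ) - 2 := by
  unfold reflM
  rw [trace_sub, trace_one, trace_smul]
  have htr : (vecMulVec g g).trace = 1 := by
    have : (vecMulVec g g).trace = ∑ i, g i * g i := by
      simp [Matrix.trace, Matrix.diag, vecMulVec_apply]
    rw [this, Finset.sum_congr rfl fun i _ => (sq (g i)).symm, hg]
  rw [htr]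
  simp

lemma proj_of_orthonormal {r k : ℕ} (W : Matrix (Fin r) (Fin k) ℝ) (hW : Wᵀ * W = 1) :
    (W * Wᵀ)ᵀ = W * Wᵀ ∧ (W * Wᵀ) * (W * Wᵀ) = W * Wᵀ ∧ (W * Wᵀ).rank = k := by
  refine ⟨by rw [transpose_mul, transpose_transpose], ?_, ?_⟩
  · rw [Matrix.mul_assoc, ← Matrix.mul_assoc Wᵀ W Wᵀ, hW, Matrix.one_mul]
  · rw [rank_self_mul_transpose, ← rank_transpose_mul_self, hW, rank_one, Fintype.card_fin]

lemma conj_proj {r : ℕ} (R P₀ : Matrix (Fin r) (Fin r) ℝ) (hRR : R * R = 1) (hRT : Rᵀ = R)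
    (hsym : P₀ᵀ = P₀) (hidem : P₀ * P₀ = P₀) :
    (R * P₀ * R)ᵀ = R * P₀ * R ∧ (R * P₀ * R) * (R * P₀ * R) = R * P₀ * R ∧
      (R * P₀ * R).rank = P₀.rank := by
  refine ⟨?_, ?_, ?_⟩
  · rw [transpose_mul, transpose_mul, hRT, hsym, mul_assoc]
  · have h1 : (R * P₀ * R) * (R * P₀ * R) = R * P₀ * (R * R) * P₀ * R := by noncomm_ring
    rw [h1, hRR, mul_one, show R * P₀ * P₀ * R = R * (P₀ * P₀) * R from by noncomm_ring, hidem]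
  · apply le_antisymm
    · exact le_trans (rank_mul_le_left _ _) (rank_mul_le_right _ _)
    · have h2 : P₀ = R * (R * P₀ * R) * R := by
        rw [show R * (R * P₀ * R) * R = (R * R) * P₀ * (R * R) from by noncomm_ring, hRR,
          one_mul, mul_one]
      conv_lhs => rw [h2]
      exact le_trans (rank_mul_le_left _ _) (rank_mul_le_right _ _)

lemma idem_full_rank {r : ℕ} (A : Matrix (Fin r) (Fin r) ℝ) (h2 : A * A = A)
    (hr : A.rank = r) : A = 1 := by
  have hrange : LinearMap.range A.mulVecLin = ⊤ := by
    apply Submodule.eq_top_of_finrank_eq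
    show A.rank = _
    rw [hr, Module.finrank_fin_fun]
  have hsurj : ∀ v : Fin r → ℝ, ∃ y, A *ᵥ y = v := by
    intro v
    obtain ⟨y, hy⟩ := (LinearMap.range_eq_top.mp hrange) v
    exact ⟨y, hy⟩
  have hid : ∀ v : Fin r → ℝ, A *ᵥ v = v := by
    intro v
    obtain ⟨y, hy⟩ := hsurj v
    calc A *ᵥ v = A *ᵥ (A *ᵥ y) := by rw [hy]
    _ = (A * A) *ᵥ y := mulVec_mulVec y A A
    _ = A *ᵥ y := by rw [h2]
    _ = v := hy
  ext i j
  have h3 := congrFun (hid (Pi.single j 1)) i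
  rw [mulVec_single] at h3
  change A i j * 1 = _ at h3
  simp only [mul_one] at h3
  rw [h3]
  simp [Pi.single_apply, Matrix.one_apply]

-- polynomial entries
lemma PF_matrix_mul {N r1 r2 r3 : ℕ} {A : (Fin N → ℝ) → Matrix (Fin r1) (Fin r2) ℝ}
    {B : (Fin N → ℝ) → Matrix (Fin r2) (Fin r3) ℝ}
    (hA : ∀ i j, PF (fun v => A v i j)) (hB : ∀ i j, PF (fun v => B v i j)) :
    ∀ i j, PF (fun v => (A v * B v) i j) := by
  intro i j
  have h : (fun v => (A v * B v) i j) = fun v => ∑ t, A v i t * B v t j := by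
    funext v; rw [Matrix.mul_apply]
  rw [h]
  exact PF_sum _ _ fun t _ => (hA i t).mul (hB t j)

lemma PF_reflM {N r : ℕ} {g : (Fin N → ℝ) → (Fin r → ℝ)} (hg : ∀ j, PF fun v => g v j) :
    ∀ i j, PF (fun v => reflM (g v) i j) := by
  intro i j
  have h : (fun v => reflM (g v) i j)
      = fun v => (1 : Matrix (Fin r) (Fin r) ℝ) i j - 2 * (g v i * g v j) := by
    funext v
    simp [reflM, Matrix.sub_apply, vecMulVec_apply, smul_eq_mul]
  rw [h]
  exact (PF_const _).sub ((PF_const 2).mul ((hg i).mul (hg j)))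
-- every vector an eigenvector implies scalar
lemma all_eigen_scalar {r : ℕ} (hr : 2 ≤ r) (M : Matrix (Fin r) (Fin r) ℝ)
    (h : ∀ w : Fin r → ℝ, ∃ c : ℝ, M *ᵥ w = c • w) :
    ∃ c : ℝ, M = c • (1 : Matrix (Fin r) (Fin r) ℝ) := by
  classical
  choose c hc using h
  set e : Fin r → (Fin r → ℝ) := fun i => Pi.single i 1 with he
  have hdiag : ∀ i j : Fin r, M j i = if j = i then c (e i) else 0 := by
    intro i j
    have h1 := congrFun (hc (e i)) j
    rw [he] at h1
    rw [mulVec_single] at h1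
    change M j i * 1 = _ at h1
    simp only [mul_one, Pi.smul_apply, Pi.single_apply, smul_eq_mul] at h1
    rw [h1]
    by_cases hji : j = i <;> simp [hji, he]
  have hM : ∀ i j : Fin r, (M *ᵥ (e i + e j)) = c (e i + e j) • (e i + e j) := fun i j => hc _
  have hcc : ∀ i j : Fin r, c (e i) = c (e j) := by
    intro i j
    by_cases hij : i = j
    · rw [hij]
    · have h2 := hM i j
      have hii := congrFun h2 i
      have hjj := congrFun h2 j
      rw [mulVec_add] at hii hjj
      have e1 : M i i = c (e i) := by rw [hdiag i i, if_pos rfl]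
      have e2 : M i j = 0 := by rw [hdiag j i, if_neg hij]
      have e3 : M j j = c (e j) := by rw [hdiag j j, if_pos rfl]
      have e4 : M j i = 0 := by rw [hdiag i j, if_neg (Ne.symm hij)]
      have hva : ∀ a b : Fin r, (M *ᵥ e a) b = M b a := by
        intro a b
        rw [he]
        rw [mulVec_single]
        show M b a * 1 = M b a
        rw [mul_one]
      rw [Pi.add_apply, hva, hva] at hii hjj
      rw [e1, e2] at hii
      rw [e3, e4] at hjj
      rw [he] at hii hjj ⊢
      simp only [Pi.add_apply, Pi.smul_apply, smul_eq_mul, Pi.single_apply, if_pos rfl,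
        if_neg hij, if_neg (Ne.symm hij)] at hii hjj
      simp only [add_zero, zero_add, mul_one] at hii hjj
      rw [hii, hjj]
  refine ⟨c (e ⟨0, by omega⟩), ?_⟩
  ext i j
  rw [hdiag j i]
  by_cases hij : i = j
  · rw [if_pos hij, hij, hcc j ⟨0, by omega⟩]
    simp [Matrix.one_apply]
  · rw [if_neg hij]
    simp [Matrix.smul_apply, Matrix.one_apply, hij]

lemma lemX {r k : ℕ} (hr : 3 ≤ r) (hk2 : 2 ≤ k) (hkr : k + 1 ≤ r)
    {u v : Fin r → ℝ} (hu : ∑ i, u i ^ 2 = 1) (hv : ∑ i, v i ^ 2 = 1)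
    (huv : vecMulVec u u ≠ vecMulVec v v) :
    ∃ P₀ : Matrix (Fin r) (Fin r) ℝ, P₀ᵀ = P₀ ∧ P₀ * P₀ = P₀ ∧ P₀.rank = k ∧
      reflM u * P₀ * reflM u ≠ reflM v * P₀ * reflM v := by
  classical
  set R₁ := reflM u with hR₁def
  set R₂ := reflM v with hR₂def
  have hR₁ : R₁ * R₁ = 1 := refl_mul_self hu
  have hR₂ : R₂ * R₂ = 1 := refl_mul_self hv
  set M := R₂ * R₁ with hM
  -- M is not scalar
  have hnotall : ¬ ∀ w : Fin r → ℝ, ∃ c : ℝ, M *ᵥ w = c • w := by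
    intro hall
    obtain ⟨c, hc⟩ := all_eigen_scalar (by omega) M hall
    have hMT : Mᵀ * M = 1 := by
      rw [hM, transpose_mul, hR₁def, hR₂def, reflT, reflT]
      rw [Matrix.mul_assoc, ← Matrix.mul_assoc (reflM v) (reflM v) (reflM u)]
      rw [← hR₂def, ← hR₁def, hR₂, one_mul, hR₁]
    have hcc : c * c = 1 := by
      rw [hc] at hMT
      have h2 : (c * c) • (1 : Matrix (Fin r) (Fin r) ℝ) = 1 := by
        rw [transpose_smul, transpose_one, smul_mul_assoc, Matrix.mul_smul, one_mul,
          smul_smul] at hMT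
        exact hMT
      have h3 := congrFun (congrFun h2 ⟨0, by omega⟩) ⟨0, by omega⟩
      simpa [Matrix.smul_apply, Matrix.one_apply] using h3
    rcases mul_self_eq_one_iff.mp hcc with h | h
    · -- c = 1 : R₂ = R₁
      apply huv
      have hM1 : M = 1 := by rw [hc, h, one_smul]
      have hRR : R₂ = R₁ := by
        calc R₂ = R₂ * (R₁ * R₁) := by rw [hR₁, mul_one]
        _ = M * R₁ := by rw [hM, Matrix.mul_assoc]
        _ = R₁ := by rw [hM1, one_mul]
      have h4 : (2:ℝ) • vecMulVec u u = (2:ℝ) • vecMulVec v v := by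
        have hthis := hRR
        rw [hR₁def, hR₂def] at hthis
        unfold reflM at hthis
        rw [sub_right_inj] at hthis
        exact hthis.symm
      have h6 : vecMulVec u u = vecMulVec v v :=
        smul_right_injective (Matrix (Fin r) (Fin r) ℝ) (two_ne_zero) h4
      exact h6
    · -- c = -1 : R₂ = -R₁, trace contradiction
      have hM1 : M = -1 := by rw [hc, h]; simp
      have hRR : R₂ = -R₁ := by
        calc R₂ = R₂ * (R₁ * R₁) := by rw [hR₁, mul_one]
        _ = M * R₁ := by rw [hM, Matrix.mul_assoc]
        _ = -R₁ := by rw [hM1]; simp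
      have t1 : R₁.trace = (r:ℝ) - 2 := trace_refl hu
      have t2 : R₂.trace = (r:ℝ) - 2 := trace_refl hv
      rw [hRR, trace_neg, t1] at t2
      have : (r:ℝ) = 2 := by linarith
      have : r = 2 := by exact_mod_cast this
      omega
  push_neg at hnotall
  obtain ⟨w0, hw0⟩ := hnotall
  have hw0ne : w0 ≠ 0 := by
    rintro rfl
    exact hw0 0 (by simp)
  have hpos : 0 < ∑ i, w0 i ^ 2 := by
    rcases (Finset.sum_nonneg fun i (_ : i ∈ Finset.univ) => sq_nonneg (w0 i)).lt_or_eq with h | h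
    · exact h
    · exfalso
      apply hw0ne
      funext i
      have := (Finset.sum_eq_zero_iff_of_nonneg
        (fun i (_ : i ∈ Finset.univ) => sq_nonneg (w0 i))).mp h.symm i (Finset.mem_univ i)
      exact pow_eq_zero_iff (n := 2) (by norm_num) |>.mp this
  set s0 := Real.sqrt (∑ i, w0 i ^ 2) with hs0def
  have hs0 : 0 < s0 := Real.sqrt_pos.mpr hpos
  set w : Fin r → ℝ := s0⁻¹ • w0 with hwdef
  have hwunit : ∑ i, w i ^ 2 = 1 := by
    rw [hwdef]
    have : ∀ i, (s0⁻¹ • w0) i ^ 2 = (s0⁻¹) ^ 2 * w0 i ^ 2 := by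
      intro i; simp [mul_pow]
    rw [Finset.sum_congr rfl fun i _ => this i, ← Finset.mul_sum]
    rw [inv_pow, Real.sq_sqrt hpos.le]
    exact inv_mul_cancel₀ hpos.ne'
  have hw : ∀ c : ℝ, M *ᵥ w ≠ c • w := by
    intro c hcw
    apply hw0 c
    rw [hwdef, mulVec_smul] at hcw
    have h3 : s0 • (s0⁻¹ • (M *ᵥ w0)) = s0 • (c • s0⁻¹ • w0) := by rw [hcw]
    rw [smul_smul, mul_inv_cancel₀ hs0.ne', one_smul, smul_smul, smul_smul,
      mul_comm s0 c, mul_assoc, mul_inv_cancel₀ hs0.ne', mul_one] at h3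
    exact h3
  -- Euclidean space construction of P₀
  have hkk : 0 < k := by omega
  set E' := EuclideanSpace ℝ (Fin r) with hE'
  set toE : (Fin r → ℝ) → E' := ⇑(WithLp.equiv 2 (Fin r → ℝ)).symm with htoEdef
  have htoE : ∀ (x : Fin r → ℝ) (t : Fin r), (toE x) t = x t := fun x t =>
    rfl
  have hip : ∀ x y : E', (inner ℝ x y : ℝ) = ∑ t, x t * y t := by
    intro x y
    rw [PiLp.inner_apply]
    simp [RCLike.inner_apply, mul_comm]
  set a : E' := toE w with hadef
  set bE : E' := toE (M *ᵥ w) with hbdef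
  set K : Submodule ℝ E' := Submodule.span ℝ {a, bE} with hKdef
  have hKa : a ∈ K := Submodule.subset_span (Set.mem_insert _ _)
  have hKb : bE ∈ K := Submodule.subset_span (Set.mem_insert_of_mem _ rfl)
  have hfinE : Module.finrank ℝ E' = r := finrank_euclideanSpace_fin
  have hKle : Module.finrank ℝ K ≤ 2 := by
    classical
    have h1 := finrank_span_finset_le_card (R := ℝ) ({a, bE} : Finset E')
    have h2 : (({a, bE} : Finset E') : Set E') = ({a, bE} : Set E') := by simp
    have h3 : ({a, bE} : Finset E').card ≤ 2 := by
      apply le_trans (Finset.card_insert_le _ _)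
      simp
    rw [h2] at h1
    exact le_trans h1 h3
  have hUrank : k - 1 ≤ Module.finrank ℝ Kᗮ := by
    have h4 := Submodule.finrank_add_finrank_orthogonal K
    rw [hfinE] at h4
    omega
  set obb := stdOrthonormalBasis ℝ (↥Kᗮ) with hobb
  set z : Fin k := ⟨0, hkk⟩ with hz
  set φ : Fin k → E' := fun i =>
    if h : i = z then a
    else (obb (Fin.castLE hUrank ⟨(i : ℕ) - 1, by have := i.isLt; omega⟩) : E') with hφ
  have hφz : φ z = a := by rw [hφ]; simp
  have hφU : ∀ i : Fin k, i ≠ z → (φ i) ∈ Kᗮ := by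
    intro i hi
    rw [hφ]
    simp only [dif_neg hi]
    exact SetLike.coe_mem _
  have hφinner : ∀ i j : Fin k, (inner ℝ (φ i) (φ j) : ℝ) = if i = j then 1 else 0 := by
    intro i j
    by_cases hi : i = z
    · by_cases hj : j = z
      · rw [hi, hj, hφz, if_pos rfl]
        rw [hip, hadef]
        have : ∀ t, (toE w) t * (toE w) t = w t ^ 2 := by
          intro t; rw [htoE]; ring
        rw [Finset.sum_congr rfl fun t _ => this t]
        exact hwunit
      · rw [if_neg (show i ≠ j from fun hcon => hj (by rw [← hcon]; exact hi))]
        have hU := hφU j hj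
        rw [hi, hφz]
        exact (Submodule.mem_orthogonal K (φ j)).mp hU a hKa
    · by_cases hj : j = z
      · rw [if_neg (show i ≠ j from fun hcon => hi (by rw [hcon]; exact hj))]
        have hU := hφU i hi
        rw [hj, hφz]
        rw [real_inner_comm]
        exact (Submodule.mem_orthogonal K (φ i)).mp hU a hKa
      · -- both are basis vectors of Kᗮ
        rw [hφ]
        simp only [dif_neg hi, dif_neg hj]
        rw [← Submodule.coe_inner]
        rw [orthonormal_iff_ite.mp obb.orthonormal]
        have hidx : (Fin.castLE hUrank ⟨(i : ℕ) - 1, by have := i.isLt; omega⟩ =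
            Fin.castLE hUrank ⟨(j : ℕ) - 1, by have := j.isLt; omega⟩) ↔ i = j := by
          constructor
          · intro h
            have h1 : (i : ℕ) - 1 = (j : ℕ) - 1 := by
              have h2 := congrArg Fin.val h
              simpa [Fin.castLE] using h2
            have hi0 : (i : ℕ) ≠ 0 := fun h0 => hi (Fin.ext h0)
            have hj0 : (j : ℕ) ≠ 0 := fun h0 => hj (Fin.ext h0)
            exact Fin.ext (by omega)
          · intro h
            subst h
            rfl
        by_cases hij : i = j
        · rw [if_pos hij, if_pos (hidx.mpr hij)]
        · rw [if_neg hij, if_neg (fun hcon => hij (hidx.mp hcon))]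
  -- build the projection
  set W : Matrix (Fin r) (Fin k) ℝ := Matrix.of (fun t i => φ i t) with hW
  have hWapp : ∀ t i, W t i = φ i t := fun t i => rfl
  have hWW : Wᵀ * W = 1 := by
    ext i j
    rw [Matrix.mul_apply]
    have h5 : ∀ t, Wᵀ i t * W t j = φ i t * φ j t := by
      intro t; rw [transpose_apply, hWapp, hWapp]
    rw [Finset.sum_congr rfl fun t _ => h5 t, ← hip, hφinner, Matrix.one_apply]
  obtain ⟨hsymP, hidemP, hrankP⟩ := proj_of_orthonormal W hWW
  refine ⟨W * Wᵀ, hsymP, hidemP, hrankP, ?_⟩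
  intro hceq
  set P₀ := W * Wᵀ with hP₀
  -- commutation
  have hcomm : M * P₀ = P₀ * M := by
    have e1 : R₂ * (R₁ * P₀ * R₁) * R₁ = R₂ * (R₂ * P₀ * R₂) * R₁ := by rw [hceq]
    have eL : R₂ * (R₁ * P₀ * R₁) * R₁ = M * P₀ := by
      rw [hM, show R₂ * (R₁ * P₀ * R₁) * R₁ = (R₂ * R₁) * P₀ * (R₁ * R₁) from by noncomm_ring,
        hR₁, mul_one]
    have eR : R₂ * (R₂ * P₀ * R₂) * R₁ = P₀ * M := by
      rw [hM, show R₂ * (R₂ * P₀ * R₂) * R₁ = (R₂ * R₂) * (P₀ * (R₂ * R₁)) from by noncomm_ring,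
        hR₂, one_mul]
    rw [← eL, e1, eR]
  -- P₀ fixes w
  have hφzt : ∀ t, φ z t = w t := by intro t; rw [hφz, hadef, htoE]
  have hWt_w : Wᵀ *ᵥ w = Pi.single z 1 := by
    funext i
    have h6 : (Wᵀ *ᵥ w) i = ∑ t, φ i t * w t := by
      simp only [Matrix.mulVec, dotProduct, transpose_apply, hWapp]
    rw [h6]
    have h7 : ∀ t, φ i t * w t = φ i t * φ z t := by intro t; rw [hφzt]
    rw [Finset.sum_congr rfl fun t _ => h7 t, ← hip, hφinner, Pi.single_apply]
  have hP₀w : P₀ *ᵥ w = w := by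
    rw [hP₀, ← mulVec_mulVec, hWt_w, mulVec_single]
    funext t
    show W t z * 1 = w t
    rw [mul_one, hWapp, hφzt]
  -- P₀ maps M*ᵥw into the line spanned by w
  set c₀ : ℝ := ∑ t, φ z t * (M *ᵥ w) t with hc₀
  have hWt_b : Wᵀ *ᵥ (M *ᵥ w) = Pi.single z c₀ := by
    funext i
    have h6 : (Wᵀ *ᵥ (M *ᵥ w)) i = ∑ t, φ i t * (M *ᵥ w) t := by
      simp only [Matrix.mulVec, dotProduct, transpose_apply, hWapp]
    rw [h6, Pi.single_apply]
    by_cases hi : i = z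
    · rw [if_pos hi, hi, hc₀]
    · rw [if_neg hi]
      have hU := hφU i hi
      have hbt : ∀ t, (M *ᵥ w) t = bE t := by intro t; rw [hbdef, htoE]
      have h8 : ∀ t, φ i t * (M *ᵥ w) t = φ i t * bE t := by intro t; rw [hbt]
      rw [Finset.sum_congr rfl fun t _ => h8 t, ← hip]
      rw [real_inner_comm]
      exact (Submodule.mem_orthogonal K (φ i)).mp hU bE hKb
  have hP₀b : P₀ *ᵥ (M *ᵥ w) = c₀ • w := by
    rw [hP₀, ← mulVec_mulVec, hWt_b, mulVec_single]
    funext t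
    show W t z * c₀ = (c₀ • w) t
    rw [hWapp, hφzt]
    simp [mul_comm]
  -- contradiction
  apply hw c₀
  calc M *ᵥ w = M *ᵥ (P₀ *ᵥ w) := by rw [hP₀w]
  _ = (M * P₀) *ᵥ w := mulVec_mulVec w M P₀
  _ = (P₀ * M) *ᵥ w := by rw [hcomm]
  _ = P₀ *ᵥ (M *ᵥ w) := (mulVec_mulVec w P₀ M).symm
  _ = c₀ • w := hP₀b


/-- For all `n ≥ 2` and `k ≥ 1`, `q_{Gr_ℝ(k,•)}(n) = 1 + max(k, q(n))`. -/
theorem qGrR_eq (n k : ℕ) (hn : 2 ≤ n) (hk : 1 ≤ k) : qGrR k n = 1 + max k (q n) := by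
  classical
  have hn1 : 1 ≤ n := by omega
  have hS1ne : {r | 1 ≤ r ∧ ExistsNonconstPolyMap n r}.Nonempty :=
    ⟨n, by omega, exists_nonconst_id n⟩
  have hq : q n ∈ {r | 1 ≤ r ∧ ExistsNonconstPolyMap n r} := Nat.sInf_mem hS1ne
  set m := max k (q n) with hm
  have hq1 : 1 ≤ q n := hq.1
  have hkm : k ≤ m := le_max_left _ _
  have hqm : q n ≤ m := le_max_right _ _
  obtain ⟨g, ⟨hgp, hgs⟩, hgnc⟩ := pad_map hqm hq.2
  have hgp' : ∀ j, PF (fun x => g x j) := fun j => hgp j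
  have hgs' : ∀ x ∈ sphereSet n, ∑ j, g x j ^ 2 = 1 := fun x hx => hgs x hx
  obtain ⟨a, ha, b, hb, hvvne⟩ := exists_proj_ne hn1 hgp' hgs' hgnc
  -- the Grassmannian map at size m + 1
  have hmain : ExistsNonconstPolyMapGrR n k (m + 1) := by
    rcases eq_or_lt_of_le hk with hk1 | hk2
    · -- k = 1
      refine ⟨fun v => vecMulVec (g v) (g v), ?_, ?_, a, ha, b, hb, hvvne⟩
      · intro i j
        have h : (fun v => vecMulVec (g v) (g v) i j) = fun v => g v i * g v j := by
          funext v; rw [vecMulVec_apply]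
        show PF (fun v => vecMulVec (g v) (g v) i j)
        rw [h]
        exact (hgp' i).mul (hgp' j)
      · intro x hx
        have hx1 : ∑ i, g x i ^ 2 = 1 := hgs' x hx
        refine ⟨vv_transpose (g x), vv_mul_vv hx1, ?_⟩
        set W : Matrix (Fin (m+1)) (Fin 1) ℝ := Matrix.of (fun t _ => g x t) with hW
        have hWW : Wᵀ * W = 1 := by
          ext i j
          rw [Matrix.mul_apply, Matrix.one_apply, if_pos (Subsingleton.elim i j)]
          have h5 : ∀ t, Wᵀ i t * W t j = g x t ^ 2 := by
            intro t
            rw [transpose_apply]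
            show g x t * g x t = _
            ring
          rw [Finset.sum_congr rfl fun t _ => h5 t, hx1]
        have hEq : vecMulVec (g x) (g x) = W * Wᵀ := by
          ext t s
          rw [vecMulVec_apply, Matrix.mul_apply]
          simp [hW]
        show (vecMulVec (g x) (g x)).rank = k
        rw [hEq, (proj_of_orthonormal W hWW).2.2, ← hk1]
    · -- k ≥ 2
      have hk2' : 2 ≤ k := hk2
      have hm2 : 2 ≤ m := le_trans hk2' hkm
      obtain ⟨P₀, hP₀T, hP₀I, hP₀R, hP₀ne⟩ := lemX (r := m + 1) (by omega) hk2' (by omega)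
        (hgs' a ha) (hgs' b hb) hvvne
      refine ⟨fun v => reflM (g v) * P₀ * reflM (g v), ?_, ?_, a, ha, b, hb, hP₀ne⟩
      · intro i j
        have h1 : ∀ i j, PF (fun v => reflM (g v) i j) := PF_reflM hgp'
        have h2 : ∀ i j : Fin (m+1), PF (fun v : Fin (n+1) → ℝ => P₀ i j) :=
          fun i j => PF_const _
        have h3 := PF_matrix_mul (A := fun v => reflM (g v)) (B := fun _ => P₀) h1 h2
        exact PF_matrix_mul (A := fun v => reflM (g v) * P₀) (B := fun v => reflM (g v)) h3 h1 i j
      · intro x hx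
        have hx1 : ∑ i, g x i ^ 2 = 1 := hgs' x hx
        obtain ⟨c1, c2, c3⟩ := conj_proj (reflM (g x)) P₀ (refl_mul_self hx1) (reflT (g x))
          hP₀T hP₀I
        exact ⟨c1, c2, by rw [c3, hP₀R]⟩
  have hmem : (1 + m) ∈ {r | k ≤ r ∧ ExistsNonconstPolyMapGrR n k r} := by
    constructor
    · omega
    · show ExistsNonconstPolyMapGrR n k (1 + m)
      rw [Nat.add_comm 1 m]
      exact hmain
  show sInf {r | k ≤ r ∧ ExistsNonconstPolyMapGrR n k r} = 1 + m
  apply le_antisymm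
  · exact Nat.sInf_le hmem
  · apply le_csInf ⟨1 + m, hmem⟩
    rintro r ⟨hkr, P, hPpoly, hPproj, hPnc⟩
    -- r ≥ k + 1
    have hrk : k + 1 ≤ r := by
      by_contra hcon
      have hrk' : r = k := by omega
      subst hrk'
      obtain ⟨x, hx, y, hy, hxy⟩ := hPnc
      have h1 := hPproj x hx
      have h2 := hPproj y hy
      exact hxy (by rw [idem_full_rank _ h1.2.1 h1.2.2, idem_full_rank _ h2.2.1 h2.2.2])
    obtain ⟨s, rfl⟩ : ∃ s, r = s + 1 := ⟨r - 1, by omega⟩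
    -- r ≥ q n + 1, via a nonconstant polynomial sphere map from a column of 2P-1
    have hqs : q n ≤ s := by
      show sInf {r | 1 ≤ r ∧ ExistsNonconstPolyMap n r} ≤ s
      apply Nat.sInf_le
      constructor
      · omega
      · obtain ⟨x, hx, y, hy, hxy⟩ := hPnc
        have hij : ∃ i j, P x i j ≠ P y i j := by
          by_contra hcon
          push_neg at hcon
          exact hxy (Matrix.ext fun i j => hcon i j)
        obtain ⟨i₀, j₀, hne⟩ := hij
        refine ⟨fun v t => 2 * P v t j₀ - (1 : Matrix (Fin (s+1)) (Fin (s+1)) ℝ) t j₀,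
          ⟨?_, ?_⟩, x, hx, y, hy, ?_⟩
        · intro t
          show PF (fun v => 2 * P v t j₀ - (1 : Matrix (Fin (s+1)) (Fin (s+1)) ℝ) t j₀)
          exact ((PF_const 2).mul (show PF (fun v => P v t j₀) from hPpoly t j₀)).sub
            (PF_const _)
        · intro v hv
          obtain ⟨hsymv, hidemv, _⟩ := hPproj v hv
          set S := (2:ℝ) • P v - 1 with hS
          set A := (2:ℝ) • P v with hA
          have hSsym : Sᵀ = S := by
            rw [hS, transpose_sub, transpose_one, hA, transpose_smul, hsymv]
          have hAA : A * A = (4:ℝ) • P v := by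
            rw [hA, smul_mul_assoc, Matrix.mul_smul, hidemv, smul_smul]
            norm_num
          have hSS : S * S = 1 := by
            rw [hS]
            calc (A - 1) * (A - 1) = (A * A - A) - (A - 1) := by
                  rw [sub_mul, mul_sub, mul_one, one_mul]
            _ = ((4:ℝ) • P v - (2:ℝ) • P v) - ((2:ℝ) • P v - 1) := by rw [hAA, hA]
            _ = 1 := by
                rw [show (4:ℝ) • P v - (2:ℝ) • P v = (2:ℝ) • P v from by
                  rw [← sub_smul]; norm_num]
                abel
          show ∑ t, (2 * P v t j₀ - (1 : Matrix (Fin (s+1)) (Fin (s+1)) ℝ) t j₀) ^ 2 = 1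
          have hentry : ∀ t, 2 * P v t j₀ - (1 : Matrix (Fin (s+1)) (Fin (s+1)) ℝ) t j₀
              = S t j₀ := by
            intro t
            rw [hS, hA]
            simp [Matrix.sub_apply, smul_eq_mul]
          have h4 : ∀ t, (2 * P v t j₀ - (1 : Matrix (Fin (s+1)) (Fin (s+1)) ℝ) t j₀) ^ 2
              = S j₀ t * S t j₀ := by
            intro t
            rw [hentry t, sq]
            have h5 : S j₀ t = S t j₀ := by
              have h6 := congrFun (congrFun hSsym t) j₀
              rw [transpose_apply] at h6
              exact h6
            rw [h5]
          rw [Finset.sum_congr rfl fun t _ => h4 t, ← Matrix.mul_apply, hSS,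
            Matrix.one_apply_eq]
        · intro hEq
          apply hne
          have h7 := congrFun hEq i₀
          simp only at h7
          linarith
    have hms : m ≤ s := max_le (by omega) hqs
    omega
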